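/- For every positive integer n, there exists a finite simple graph H_n such that η(H_n) = n; that is, H_n admits a link-irregular labeling using n distinct labels but none using fewer than n distinct labels. -/

import Mathlib

open SimpleGraph

variable {V : Type*}

/-- Two vertices have isomorphic labeled links: an equivalence of neighborhoods preserving
adjacency and edge labels. -/
def LabeledLinkIso (G : SimpleGraph V) (ℓ : Sym2 V → ℕ+) (u v : V) : Prop :=
  ∃ e : (G.neighborSet u) ≃ (G.neighborSet v),
    (∀ a b : G.neighborSet u, G.Adj a.1 b.1 ↔ G.Adj (e a).1 (e b).1) ∧
    (∀ a b : G.neighborSet u, G.Adj a.1 b.1 → ℓ s(a.1, b.1) = ℓ s((e a).1, (e b).1))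

/-- An edge labeling is link-irregular if distinct vertices have non-isomorphic labeled links. -/
def IsLinkIrregular (G : SimpleGraph V) (ℓ : Sym2 V → ℕ+) : Prop :=
  ∀ u v : V, u ≠ v → ¬ LabeledLinkIso G ℓ u v

/-- A graph admits a link-irregular labeling. -/
def HasLinkIrregularLabeling (G : SimpleGraph V) : Prop :=
  ∃ ℓ : Sym2 V → ℕ+, IsLinkIrregular G ℓ

/-- The link-irregular labeling number η(G): the minimum number of distinct labels used
on the edges of G over all link-irregular labelings, or ∞ if none exists. -/
noncomputable def linkIrregularNumber (G : SimpleGraph V) : ℕ∞ :=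
  sInf {c : ℕ∞ | ∃ ℓ : Sym2 V → ℕ+, IsLinkIrregular G ℓ ∧ c = ((ℓ '' G.edgeSet).ncard : ℕ∞)}

/-- The edge set of the link of x, viewed as a set of edges of G. -/
def linkEdgeSet (G : SimpleGraph V) (x : V) : Set (Sym2 V) :=
  {e | e ∈ G.edgeSet ∧ ∀ v ∈ e, v ∈ G.neighborSet x}

/-- Active neighborhood. -/
def activeNeighborSet (G : SimpleGraph V) (x : V) : Set V :=
  {u ∈ G.neighborSet x | ∃ w ∈ G.neighborSet x, G.Adj u w}

/-- A graph is cut-irregular if distinct vertex-deleted subgraphs are non-isomorphic. -/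
def CutIrregular (H : SimpleGraph V) : Prop :=
  ∀ u v : V, u ≠ v → ¬ Nonempty ((H.induce ({u} : Set V)ᶜ) ≃g (H.induce ({v} : Set V)ᶜ))

/-- The wheel graph W_n: a cycle C_n together with a universal vertex. -/
def wheelGraph (n : ℕ) : SimpleGraph (Option (Fin n)) where
  Adj x y :=
    match x, y with
    | none, none => False
    | none, some _ => True
    | some _, none => True
    | some i, some j => (cycleGraph n).Adj i j
  symm := by
    constructor
    rintro (_|i) (_|j) h
    · exact h
    · trivial
    · trivial
    · exact (cycleGraph n).adj_symm h
  loopless := by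
    constructor
    rintro (_|i) h
    · exact h
    · exact (cycleGraph n).irrefl h

/-- The join of two graphs. -/
def graphJoin {W : Type*} (G : SimpleGraph V) (H : SimpleGraph W) : SimpleGraph (V ⊕ W) where
  Adj x y :=
    match x, y with
    | Sum.inl a, Sum.inl b => G.Adj a b
    | Sum.inr a, Sum.inr b => H.Adj a b
    | _, _ => True
  symm := by
    constructor
    rintro (a|a) (b|b) h
    · exact G.adj_symm h
    · trivial
    · trivial
    · exact H.adj_symm h
  loopless := by
    constructor
    rintro (a|a) h
    · exact G.irrefl h
    · exact H.irrefl h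

/-- The hypercube graph Q_n. -/
def hypercubeGraph (n : ℕ) : SimpleGraph (Fin n → Bool) where
  Adj x y := (Finset.univ.filter fun i => x i ≠ y i).card = 1
  symm := by
    constructor
    intro x y h
    have : (Finset.univ.filter fun i => y i ≠ x i) = (Finset.univ.filter fun i => x i ≠ y i) := by
      apply Finset.filter_congr
      intro i _
      simp [ne_comm]
    rw [this]
    exact h
  loopless := by
    constructor
    intro x h
    simp at h

-- ===== my auxiliaries =====
namespace MyAux
variable {G : SimpleGraph V} {ℓ : Sym2 V → ℕ+}

lemma ncard_eq_of_iso {u v : V} (h : LabeledLinkIso G ℓ u v) :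
    (G.neighborSet u).ncard = (G.neighborSet v).ncard := by
  obtain ⟨e, -, -⟩ := h
  rw [← Nat.card_coe_set_eq, ← Nat.card_coe_set_eq]
  exact Nat.card_congr e

lemma sym2_eq_of_pair {x y c a : V} (hx : x ∈ ({c, a} : Set V)) (hy : y ∈ ({c, a} : Set V))
    (hxy : x ≠ y) : s(x, y) = s(c, a) := by
  simp only [Set.mem_insert_iff, Set.mem_singleton_iff] at hx hy
  rcases hx with rfl | rfl <;> rcases hy with rfl | rfl
  · exact absurd rfl hxy
  · rfl
  · exact Sym2.eq_swap
  · exact absurd rfl hxy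

lemma label_eq_of_iso {v v' c a c' a' : V}
    (hN : G.neighborSet v = {c, a}) (hN' : G.neighborSet v' = {c', a'})
    (hca : G.Adj c a) (h : LabeledLinkIso G ℓ v v') :
    ℓ s(c, a) = ℓ s(c', a') := by
  obtain ⟨e, hadj, hlab⟩ := h
  have memc : c ∈ G.neighborSet v := by rw [hN]; exact Set.mem_insert _ _
  have mema : a ∈ G.neighborSet v := by rw [hN]; exact Set.mem_insert_of_mem _ rfl
  have h1 := hlab ⟨c, memc⟩ ⟨a, mema⟩ hca
  have hmem' : ∀ z : G.neighborSet v', z.1 ∈ ({c', a'} : Set V) := fun z => hN' ▸ z.2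
  have hxy : (e ⟨c, memc⟩).1 ≠ (e ⟨a, mema⟩).1 := by
    intro hh
    have h2 : e ⟨c, memc⟩ = e ⟨a, mema⟩ := Subtype.ext hh
    have h3 := e.injective h2
    exact hca.ne (congrArg Subtype.val h3)
  rw [h1, sym2_eq_of_pair (hmem' _) (hmem' _) hxy]

lemma iso_of_pair [DecidableEq V] {v v' c a a' : V}
    (hN : G.neighborSet v = {c, a}) (hN' : G.neighborSet v' = {c, a'})
    (hca : G.Adj c a) (hca' : G.Adj c a')
    (hl : ℓ s(c, a) = ℓ s(c, a')) : LabeledLinkIso G ℓ v v' := by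
  have hne : c ≠ a := hca.ne
  have hne' : c ≠ a' := hca'.ne
  set f : V → V := fun x => if x = c then c else a' with hf
  set g : V → V := fun x => if x = c then c else a with hg
  have hmem : ∀ x : G.neighborSet v, x.1 = c ∨ x.1 = a := by
    intro x
    have h2 : (x : V) ∈ ({c, a} : Set V) := hN ▸ x.2
    simpa using h2
  have hmem' : ∀ x : G.neighborSet v', x.1 = c ∨ x.1 = a' := by
    intro x
    have h2 : (x : V) ∈ ({c, a'} : Set V) := hN' ▸ x.2
    simpa using h2
  have hfc : f c = c := if_pos rfl
  have hfa : f a = a' := if_neg (fun h => hne h.symm)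
  have hgc : g c = c := if_pos rfl
  have hga' : g a' = a := if_neg (fun h => hne' h.symm)
  have hfmem : ∀ x : G.neighborSet v, f x.1 ∈ G.neighborSet v' := by
    intro x
    rcases hmem x with h | h <;> rw [h, hN']
    · rw [hfc]; exact Set.mem_insert _ _
    · rw [hfa]; exact Set.mem_insert_of_mem _ rfl
  have hgmem : ∀ x : G.neighborSet v', g x.1 ∈ G.neighborSet v := by
    intro x
    rcases hmem' x with h | h <;> rw [h, hN]
    · rw [hgc]; exact Set.mem_insert _ _
    · rw [hga']; exact Set.mem_insert_of_mem _ rfl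
  have hgf : ∀ x : G.neighborSet v, g (f x.1) = x.1 := by
    intro x
    rcases hmem x with h | h <;> rw [h]
    · rw [hfc, hgc]
    · rw [hfa, hga']
  have hfg : ∀ x : G.neighborSet v', f (g x.1) = x.1 := by
    intro x
    rcases hmem' x with h | h <;> rw [h]
    · rw [hgc, hfc]
    · rw [hga', hfa]
  set e : (G.neighborSet v) ≃ (G.neighborSet v') :=
    ⟨fun x => ⟨f x.1, hfmem x⟩, fun x => ⟨g x.1, hgmem x⟩,
     fun x => Subtype.ext (hgf x), fun x => Subtype.ext (hfg x)⟩ with he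
  have heval : ∀ x : G.neighborSet v, (e x).1 = f x.1 := fun x => rfl
  have adj_pair : ∀ x y : V, x ∈ ({c, a} : Set V) → y ∈ ({c, a} : Set V) →
      (G.Adj x y ↔ x ≠ y) := by
    intro x y hx hy
    simp only [Set.mem_insert_iff, Set.mem_singleton_iff] at hx hy
    rcases hx with rfl | rfl <;> rcases hy with rfl | rfl
    · simp
    · simp [hca, hne]
    · simp [hca.symm, hne.symm]
    · simp
  have adj_pair' : ∀ x y : V, x ∈ ({c, a'} : Set V) → y ∈ ({c, a'} : Set V) →
      (G.Adj x y ↔ x ≠ y) := by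
    intro x y hx hy
    simp only [Set.mem_insert_iff, Set.mem_singleton_iff] at hx hy
    rcases hx with rfl | rfl <;> rcases hy with rfl | rfl
    · simp
    · simp [hca', hne']
    · simp [hca'.symm, hne'.symm]
    · simp
  have hfinj : ∀ x y : G.neighborSet v, x.1 ≠ y.1 ↔ f x.1 ≠ f y.1 := by
    intro x y
    constructor
    · intro h hh
      exact h (by rw [← hgf x, ← hgf y, hh])
    · intro h hh
      exact h (by rw [hh])
  refine ⟨e, ?_, ?_⟩
  · intro x y
    rw [heval x, heval y,
      adj_pair x.1 y.1 (hN ▸ x.2) (hN ▸ y.2),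
      adj_pair' (f x.1) (f y.1) (hN' ▸ hfmem x) (hN' ▸ hfmem y)]
    exact hfinj x y
  · intro x y hadj
    have hxy : x.1 ≠ y.1 := hadj.ne
    have hs1 : s(x.1, y.1) = s(c, a) := sym2_eq_of_pair (hN ▸ x.2) (hN ▸ y.2) hxy
    have hs2 : s((e x).1, (e y).1) = s(c, a') := by
      rw [heval x, heval y]
      exact sym2_eq_of_pair (hN' ▸ hfmem x) (hN' ▸ hfmem y) ((hfinj x y).1 hxy)
    rw [hs1, hs2]
    exact hl

lemma linkIrregularNumber_eq [Fintype V] (G : SimpleGraph V) (n : ℕ)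
    (ℓ₀ : Sym2 V → ℕ+) (h0 : IsLinkIrregular G ℓ₀) (hcard : (ℓ₀ '' G.edgeSet).ncard = n)
    (hlow : ∀ ℓ : Sym2 V → ℕ+, IsLinkIrregular G ℓ → n ≤ (ℓ '' G.edgeSet).ncard) :
    linkIrregularNumber G = n := by
  unfold linkIrregularNumber
  apply le_antisymm
  · exact sInf_le ⟨ℓ₀, h0, by rw [hcard]⟩
  · apply le_sInf
    rintro c ⟨ℓ, hirr, rfl⟩
    exact_mod_cast hlow ℓ hirr

lemma le_ncard_of_inj [Fintype V] {G : SimpleGraph V} {ℓ : Sym2 V → ℕ+} {α : Type*} [Fintype α]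
    (f : α → Sym2 V) (hf : ∀ x, f x ∈ G.edgeSet)
    (hinj : Function.Injective (fun x => ℓ (f x))) :
    Fintype.card α ≤ (ℓ '' G.edgeSet).ncard := by
  classical
  have hsub : Set.range (fun x => ℓ (f x)) ⊆ ℓ '' G.edgeSet := by
    rintro _ ⟨x, rfl⟩; exact ⟨f x, hf x, rfl⟩
  have hfin : (ℓ '' G.edgeSet).Finite := (G.edgeSet.toFinite).image ℓ
  calc Fintype.card α = (Set.range fun x => ℓ (f x)).ncard := by
        rw [← Nat.card_coe_set_eq, Nat.card_range_of_injective hinj, Nat.card_eq_fintype_card]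
    _ ≤ _ := Set.ncard_le_ncard hsub hfin

end MyAux

namespace Fam

/-- vertex type: `none` = apex u, `some none` = pendant p, `some (some z)` = matched vertex. -/
abbrev FV (m : ℕ) : Type := Option (Option (Fin m × Bool))

def fw {m : ℕ} (z : Fin m × Bool) : FV m := some (some z)

lemma fw_inj {m : ℕ} : Function.Injective (fw (m := m)) := by
  intro a b h
  simpa [fw] using h

/-- predicate: z is the special vertex (0, false) -/
def sp {m : ℕ} (z : Fin m × Bool) : Prop := z.1.val = 0 ∧ z.2 = false

instance {m : ℕ} (z : Fin m × Bool) : Decidable (sp z) := by unfold sp; infer_instance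

/-- the family: apex joined to a matching of size m, plus a pendant attached to
the apex (t = false) or to the matched vertex (0, false) (t = true). -/
def fam (t : Bool) (m : ℕ) : SimpleGraph (FV m) where
  Adj x y :=
    match x, y with
    | none, none => False
    | none, some none => t = false
    | some none, none => t = false
    | none, some (some _) => True
    | some (some _), none => True
    | some none, some none => False
    | some none, some (some z) => t = true ∧ sp z
    | some (some z), some none => t = true ∧ sp z
    | some (some z), some (some z') => z.1 = z'.1 ∧ z.2 ≠ z'.2
  symm := by
    constructor
    rintro (_|(_|z)) (_|(_|z')) h
    all_goals try exact h
    exact ⟨h.1.symm, fun e => h.2 e.symm⟩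
  loopless := by
    constructor
    rintro (_|(_|z)) h
    all_goals try exact h
    exact h.2 rfl

variable {m : ℕ} {t : Bool}

lemma partner_iff (z z' : Fin m × Bool) :
    (z.1 = z'.1 ∧ z.2 ≠ z'.2) ↔ z' = (z.1, !z.2) := by
  obtain ⟨a, b⟩ := z
  obtain ⟨a', b'⟩ := z'
  cases b <;> cases b' <;> simp [Prod.ext_iff, eq_comm]

lemma sp_iff (hm : 0 < m) (z : Fin m × Bool) : sp z ↔ z = ((⟨0, hm⟩ : Fin m), false) := by
  obtain ⟨a, b⟩ := z
  unfold sp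
  simp [Prod.ext_iff, Fin.ext_iff]

lemma nb_w (z : Fin m × Bool) (h : ¬ (t = true ∧ sp z)) :
    (fam t m).neighborSet (fw z) = {none, fw (z.1, !z.2)} := by
  ext x
  simp only [SimpleGraph.mem_neighborSet, Set.mem_insert_iff, Set.mem_singleton_iff]
  rcases x with _ | (_ | z')
  · show True ↔ _
    simp
  · show (t = true ∧ sp z) ↔ _
    simp [fw, h]
  · show (z.1 = z'.1 ∧ z.2 ≠ z'.2) ↔ _
    rw [partner_iff]
    simp [fw]

lemma nb_w0 (z : Fin m × Bool) (h : t = true ∧ sp z) :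
    (fam t m).neighborSet (fw z) = {none, fw (z.1, !z.2), some none} := by
  ext x
  simp only [SimpleGraph.mem_neighborSet, Set.mem_insert_iff, Set.mem_singleton_iff]
  rcases x with _ | (_ | z')
  · show True ↔ _
    simp
  · show (t = true ∧ sp z) ↔ _
    simp [fw, h]
  · show (z.1 = z'.1 ∧ z.2 ≠ z'.2) ↔ _
    rw [partner_iff]
    simp [fw]

lemma nb_u_false : (fam false m).neighborSet none
    = insert (some none) (Set.range (fw (m := m))) := by
  ext x
  simp only [SimpleGraph.mem_neighborSet, Set.mem_insert_iff, Set.mem_range]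
  rcases x with _ | (_ | z')
  · show False ↔ _
    simp [fw]
  · show (false = false) ↔ _
    simp
  · show True ↔ _
    simp only [true_iff]
    exact Or.inr ⟨z', rfl⟩

lemma nb_u_true : (fam true m).neighborSet none = Set.range (fw (m := m)) := by
  ext x
  simp only [SimpleGraph.mem_neighborSet, Set.mem_range]
  rcases x with _ | (_ | z')
  · show False ↔ _
    simp [fw]
  · show (true = false) ↔ _
    simp [fw]
  · show True ↔ _
    simp only [true_iff]
    exact ⟨z', rfl⟩

lemma nb_p_false : (fam false m).neighborSet (some none) = {none} := by
  ext x
  simp only [SimpleGraph.mem_neighborSet, Set.mem_singleton_iff]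
  rcases x with _ | (_ | z')
  · show (false = false) ↔ _
    simp
  · show False ↔ _
    simp
  · show (false = true ∧ sp z') ↔ _
    simp [fw]

lemma nb_p_true (hm : 0 < m) :
    (fam true m).neighborSet (some none) = {fw ((⟨0, hm⟩ : Fin m), false)} := by
  ext x
  simp only [SimpleGraph.mem_neighborSet, Set.mem_singleton_iff]
  rcases x with _ | (_ | z')
  · show (true = false) ↔ _
    simp [fw]
  · show False ↔ _
    simp [fw]
  · show (true = true ∧ sp z') ↔ _
    rw [sp_iff hm]
    simp [fw]

-- cardinalities
lemma ncard_nb_w (z : Fin m × Bool) (h : ¬ (t = true ∧ sp z)) :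
    ((fam t m).neighborSet (fw z)).ncard = 2 := by
  rw [nb_w z h, Set.ncard_pair (by simp [fw])]

lemma ncard_nb_w0 (z : Fin m × Bool) (h : t = true ∧ sp z) :
    ((fam t m).neighborSet (fw z)).ncard = 3 := by
  rw [nb_w0 z h]
  rw [Set.ncard_insert_of_notMem (by simp [fw]) (Set.toFinite _),
      Set.ncard_pair (by simp [fw])]

lemma ncard_range_fw : (Set.range (fw (m := m))).ncard = 2 * m := by
  rw [← Nat.card_coe_set_eq, Nat.card_range_of_injective fw_inj, Nat.card_eq_fintype_card]
  simp [Fintype.card_prod, mul_comm]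

lemma ncard_nb_u_false : ((fam false m).neighborSet none).ncard = 2 * m + 1 := by
  rw [nb_u_false, Set.ncard_insert_of_notMem (by rintro ⟨z, hz⟩; simp [fw] at hz)
    (Set.toFinite _), ncard_range_fw]

lemma ncard_nb_u_true : ((fam true m).neighborSet none).ncard = 2 * m := by
  rw [nb_u_true, ncard_range_fw]

lemma ncard_nb_p_false : ((fam false m).neighborSet (some none)).ncard = 1 := by
  rw [nb_p_false, Set.ncard_singleton]

lemma ncard_nb_p_true (hm : 0 < m) : ((fam true m).neighborSet (some none)).ncard = 1 := by
  rw [nb_p_true hm, Set.ncard_singleton]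



lemma ncard_nb_w' (z : Fin m × Bool) (h : ¬ (t = true ∧ sp z)) :
    ((fam t m).neighborSet (some (some z))).ncard = 2 := ncard_nb_w z h

lemma ncard_nb_w0' (z : Fin m × Bool) (h : t = true ∧ sp z) :
    ((fam t m).neighborSet (some (some z))).ncard = 3 := ncard_nb_w0 z h

lemma hw_true (z : Fin m × Bool) : ((fam true m).neighborSet (some (some z))).ncard = 2 ∨
    ((fam true m).neighborSet (some (some z))).ncard = 3 := by
  by_cases h : sp z
  · exact Or.inr (ncard_nb_w0' z ⟨rfl, h⟩)
  · exact Or.inl (ncard_nb_w' z (by simp [h]))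

lemma flip_inj : Function.Injective (fun z : Fin m × Bool => ((z.1, !z.2) : Fin m × Bool)) := by
  intro z z' h
  simp only [Prod.ext_iff] at h ⊢
  exact ⟨h.1, Bool.not_inj h.2⟩

lemma adj_u_w (z : Fin m × Bool) : (fam t m).Adj none (fw z) := trivial

-- ===== the labeling =====

def code (z : Fin m × Bool) : ℕ+ := ⟨2 * z.1.val + cond z.2 2 1, by cases z.2 <;> simp⟩

lemma code_inj : Function.Injective (code (m := m)) := by
  intro z z' h
  have hv : 2 * z.1.val + cond z.2 2 1 = 2 * z'.1.val + cond z'.2 2 1 :=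
    congrArg PNat.val h
  obtain ⟨a, b⟩ := z
  obtain ⟨a', b'⟩ := z'
  cases b <;> cases b' <;> simp only [Bool.cond_false, Bool.cond_true] at hv <;>
    simp [Prod.ext_iff, Fin.ext_iff] <;> omega

lemma code_zero (hm : 0 < m) : code ((⟨0, hm⟩ : Fin m), false) = 1 := rfl

def spokeLabel (t : Bool) (z : Fin m × Bool) : ℕ+ :=
  if t = true ∧ z.1.val = 0 ∧ z.2 = true then 1 else code z

def famLabelFun (t : Bool) (m : ℕ) : FV m → FV m → ℕ+ := fun x y =>
  match x, y with
  | none, some (some z) => spokeLabel t z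
  | some (some z), none => spokeLabel t z
  | _, _ => 1

lemma famLabelFun_symm (t : Bool) (m : ℕ) (x y : FV m) :
    famLabelFun t m x y = famLabelFun t m y x := by
  rcases x with _ | (_ | z) <;> rcases y with _ | (_ | z') <;> rfl

def famLabel (t : Bool) (m : ℕ) : Sym2 (FV m) → ℕ+ :=
  Sym2.lift ⟨famLabelFun t m, famLabelFun_symm t m⟩

lemma famLabel_mk (x y : FV m) : famLabel t m s(x, y) = famLabelFun t m x y := rfl

lemma spokeLabel_false (z : Fin m × Bool) : spokeLabel false z = code z := by
  simp [spokeLabel]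

lemma spokeLabel_true_of (z : Fin m × Bool) (h : ¬ (z.1.val = 0 ∧ z.2 = true)) :
    spokeLabel true z = code z := by
  simp [spokeLabel, h]

-- ===== image of the labeling =====

lemma image_false (hm : 0 < m) :
    famLabel false m '' (fam false m).edgeSet = Set.range (code (m := m)) := by
  apply Set.Subset.antisymm
  · rintro _ ⟨e, he, rfl⟩
    induction e using Sym2.ind with
    | _ x y =>
      rw [SimpleGraph.mem_edgeSet] at he
      rw [famLabel_mk]
      rcases x with _ | (_ | z) <;> rcases y with _ | (_ | z')
      all_goals first
        | exact absurd he (by intro h; exact h)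
        | (show (1 : ℕ+) ∈ _; exact ⟨_, code_zero hm⟩)
        | (show spokeLabel false _ ∈ _; rw [spokeLabel_false]; exact ⟨_, rfl⟩)
  · rintro _ ⟨z, rfl⟩
    refine ⟨s(none, fw z), (SimpleGraph.mem_edgeSet _).2 (adj_u_w z), ?_⟩
    rw [famLabel_mk]
    show spokeLabel false z = code z
    exact spokeLabel_false z

lemma image_true (hm : 0 < m) :
    famLabel true m '' (fam true m).edgeSet
      = code '' {z : Fin m × Bool | ¬ (z.1.val = 0 ∧ z.2 = true)} := by
  apply Set.Subset.antisymm
  · rintro _ ⟨e, he, rfl⟩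
    induction e using Sym2.ind with
    | _ x y =>
      rw [SimpleGraph.mem_edgeSet] at he
      rw [famLabel_mk]
      have h1 : (1 : ℕ+) ∈ code '' {z : Fin m × Bool | ¬ (z.1.val = 0 ∧ z.2 = true)} :=
        ⟨((⟨0, hm⟩ : Fin m), false), by simp, code_zero hm⟩
      have hspoke : ∀ z : Fin m × Bool,
          spokeLabel true z ∈ code '' {z : Fin m × Bool | ¬ (z.1.val = 0 ∧ z.2 = true)} := by
        intro z
        by_cases h : z.1.val = 0 ∧ z.2 = true
        · rw [spokeLabel, if_pos ⟨rfl, h⟩]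
          exact h1
        · rw [spokeLabel_true_of z h]
          exact ⟨z, h, rfl⟩
      rcases x with _ | (_ | z) <;> rcases y with _ | (_ | z')
      all_goals first
        | exact absurd he (by intro h; exact h)
        | exact h1
        | exact hspoke _
  · rintro _ ⟨z, hz, rfl⟩
    refine ⟨s(none, fw z), (SimpleGraph.mem_edgeSet _).2 (adj_u_w z), ?_⟩
    rw [famLabel_mk]
    show spokeLabel true z = code z
    exact spokeLabel_true_of z hz

lemma ncard_range_code : (Set.range (code (m := m))).ncard = 2 * m := by
  rw [← Nat.card_coe_set_eq, Nat.card_range_of_injective code_inj,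
    Nat.card_eq_fintype_card]
  simp [mul_comm]

lemma ncard_image_code_true (hm : 0 < m) :
    (code '' {z : Fin m × Bool | ¬ (z.1.val = 0 ∧ z.2 = true)}).ncard = 2 * m - 1 := by
  classical
  have hset : {z : Fin m × Bool | ¬ (z.1.val = 0 ∧ z.2 = true)}
      = {((⟨0, hm⟩ : Fin m), true)}ᶜ := by
    ext z
    obtain ⟨a, b⟩ := z
    simp [Prod.ext_iff, Fin.ext_iff]
  rw [Set.ncard_image_of_injective _ code_inj, hset]
  have h2 : ({((⟨0, hm⟩ : Fin m), true)} : Set (Fin m × Bool)).ncard = 1 :=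
    Set.ncard_singleton _
  have h3 := Set.ncard_add_ncard_compl ({((⟨0, hm⟩ : Fin m), true)} : Set (Fin m × Bool))
  rw [h2] at h3
  have h4 : Nat.card (Fin m × Bool) = 2 * m := by
    rw [Nat.card_eq_fintype_card]; simp [mul_comm]
  omega

-- ===== upper bound : irregularity of famLabel =====

lemma irr_false (hm : 0 < m) : IsLinkIrregular (fam false m) (famLabel false m) := by
  intro x y hne hiso
  have hcard := MyAux.ncard_eq_of_iso hiso
  have hnsp : ∀ z : Fin m × Bool, ¬ ((false : Bool) = true ∧ sp z) := by simp
  rcases x with _ | (_ | z) <;> rcases y with _ | (_ | z')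
  · exact hne rfl
  · rw [ncard_nb_u_false, ncard_nb_p_false] at hcard; omega
  · rw [ncard_nb_u_false, ncard_nb_w' z' (hnsp z')] at hcard; omega
  · rw [ncard_nb_p_false, ncard_nb_u_false] at hcard; omega
  · exact hne rfl
  · rw [ncard_nb_p_false, ncard_nb_w' z' (hnsp z')] at hcard; omega
  · rw [ncard_nb_w' z (hnsp z), ncard_nb_u_false] at hcard; omega
  · rw [ncard_nb_w' z (hnsp z), ncard_nb_p_false] at hcard; omega
  · have hlab := MyAux.label_eq_of_iso (nb_w z (hnsp z)) (nb_w z' (hnsp z'))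
      (adj_u_w _) hiso
    rw [famLabel_mk, famLabel_mk] at hlab
    have : code ((z.1, !z.2) : Fin m × Bool) = code ((z'.1, !z'.2) : Fin m × Bool) := by
      rw [← spokeLabel_false ((z.1, !z.2) : Fin m × Bool),
        ← spokeLabel_false ((z'.1, !z'.2) : Fin m × Bool)]
      exact hlab
    have := flip_inj (code_inj this)
    exact hne (by rw [this])


lemma flip_cond (z : Fin m × Bool) :
    (((z.1, !z.2) : Fin m × Bool).1.val = 0 ∧ ((z.1, !z.2) : Fin m × Bool).2 = true) ↔ sp z := by
  obtain ⟨a, b⟩ := z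
  cases b <;> simp [sp]

lemma sp_flip (z : Fin m × Bool) : sp ((z.1, !z.2) : Fin m × Bool) ↔ (z.1.val = 0 ∧ z.2 = true) := by
  obtain ⟨a, b⟩ := z
  cases b <;> simp [sp]

lemma irr_true (hm : 2 ≤ m) : IsLinkIrregular (fam true m) (famLabel true m) := by
  have hm0 : 0 < m := by omega
  intro x y hne hiso
  have hcard := MyAux.ncard_eq_of_iso hiso
  have hw := hw_true (m := m)
  rcases x with _ | (_ | z) <;> rcases y with _ | (_ | z')
  · exact hne rfl
  · rw [ncard_nb_u_true, ncard_nb_p_true hm0] at hcard; omega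
  · rw [ncard_nb_u_true] at hcard; rcases hw z' with h | h <;> rw [h] at hcard <;> omega
  · rw [ncard_nb_p_true hm0, ncard_nb_u_true] at hcard; omega
  · exact hne rfl
  · rw [ncard_nb_p_true hm0] at hcard; rcases hw z' with h | h <;> rw [h] at hcard <;> omega
  · rw [ncard_nb_u_true] at hcard; rcases hw z with h | h <;> rw [h] at hcard <;> omega
  · rw [ncard_nb_p_true hm0] at hcard; rcases hw z with h | h <;> rw [h] at hcard <;> omega
  · by_cases h1 : sp z <;> by_cases h2 : sp z'
    · exact hne (by rw [(sp_iff hm0 z).1 h1, (sp_iff hm0 z').1 h2])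
    · rw [ncard_nb_w0' z ⟨rfl, h1⟩, ncard_nb_w' z' (by simp [h2])] at hcard; omega
    · rw [ncard_nb_w' z (by simp [h1]), ncard_nb_w0' z' ⟨rfl, h2⟩] at hcard; omega
    · have hlab := MyAux.label_eq_of_iso (nb_w z (by simp [h1])) (nb_w z' (by simp [h2]))
        (adj_u_w _) hiso
      rw [famLabel_mk, famLabel_mk] at hlab
      have e1 : ¬ (((z.1, !z.2) : Fin m × Bool).1.val = 0
          ∧ ((z.1, !z.2) : Fin m × Bool).2 = true) :=
        fun hc => h1 ((flip_cond z).1 hc)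
      have e2 : ¬ (((z'.1, !z'.2) : Fin m × Bool).1.val = 0
          ∧ ((z'.1, !z'.2) : Fin m × Bool).2 = true) :=
        fun hc => h2 ((flip_cond z').1 hc)
      have hcode : code ((z.1, !z.2) : Fin m × Bool) = code ((z'.1, !z'.2) : Fin m × Bool) := by
        rw [← spokeLabel_true_of _ e1, ← spokeLabel_true_of _ e2]
        exact hlab
      exact hne (by rw [flip_inj (code_inj hcode)])

-- ===== lower bounds =====

lemma low_false (hm : 0 < m) (ℓ : Sym2 (FV m) → ℕ+) (hirr : IsLinkIrregular (fam false m) ℓ) :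
    2 * m ≤ (ℓ '' (fam false m).edgeSet).ncard := by
  classical
  have hnsp : ∀ z : Fin m × Bool, ¬ ((false : Bool) = true ∧ sp z) := by simp
  have key := MyAux.le_ncard_of_inj (G := fam false m) (ℓ := ℓ)
    (f := fun z : Fin m × Bool => s((none : FV m), fw z))
    (fun z => (SimpleGraph.mem_edgeSet _).2 (adj_u_w z)) ?_
  · simpa [mul_comm] using key
  · intro z z' h
    by_contra hzz
    have hN : (fam false m).neighborSet (fw ((z.1, !z.2) : Fin m × Bool)) = {none, fw z} := by
      rw [nb_w _ (hnsp _)]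
      congr 1
      rw [show (((z.1, !z.2) : Fin m × Bool).1, !((z.1, !z.2) : Fin m × Bool).2) = z by simp]
    have hN' : (fam false m).neighborSet (fw ((z'.1, !z'.2) : Fin m × Bool)) = {none, fw z'} := by
      rw [nb_w _ (hnsp _)]
      congr 1
      rw [show (((z'.1, !z'.2) : Fin m × Bool).1, !((z'.1, !z'.2) : Fin m × Bool).2) = z' by simp]
    have hiso := MyAux.iso_of_pair (ℓ := ℓ) hN hN' (adj_u_w z) (adj_u_w z') h
    exact hirr _ _ (fun hc => hzz (flip_inj (fw_inj hc))) hiso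

lemma low_true (hm : 2 ≤ m) (ℓ : Sym2 (FV m) → ℕ+) (hirr : IsLinkIrregular (fam true m) ℓ) :
    2 * m - 1 ≤ (ℓ '' (fam true m).edgeSet).ncard := by
  classical
  have hm0 : 0 < m := by omega
  set pt : Fin m × Bool := ((⟨0, hm0⟩ : Fin m), true) with hpt
  have key := MyAux.le_ncard_of_inj (G := fam true m) (ℓ := ℓ)
    (α := {z : Fin m × Bool // ¬ (z = pt)})
    (f := fun z => s((none : FV m), fw z.1))
    (fun z => (SimpleGraph.mem_edgeSet _).2 (adj_u_w z.1)) ?_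
  · have hcardα : Fintype.card {z : Fin m × Bool // ¬ (z = pt)} = 2 * m - 1 := by
      rw [Fintype.card_subtype_compl, Fintype.card_subtype_eq]
      simp [mul_comm]
    rw [hcardα] at key
    exact key
  · rintro ⟨z, hz⟩ ⟨z', hz'⟩ h
    simp only at h
    have hsp : ∀ w : Fin m × Bool, ¬ (w = pt) → ¬ ((true : Bool) = true ∧ sp ((w.1, !w.2) : Fin m × Bool)) := by
      rintro ⟨a, b⟩ hw ⟨-, hs⟩
      apply hw
      rw [hpt]
      rcases hs with ⟨h0, hb⟩
      cases b
      · simp at hb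
      · exact Prod.ext (Fin.ext h0) rfl
    by_contra hzz
    have hne : z ≠ z' := fun hc => hzz (Subtype.ext hc)
    have hN : (fam true m).neighborSet (fw ((z.1, !z.2) : Fin m × Bool)) = {none, fw z} := by
      rw [nb_w _ (hsp z hz)]
      congr 1
      rw [show (((z.1, !z.2) : Fin m × Bool).1, !((z.1, !z.2) : Fin m × Bool).2) = z by simp]
    have hN' : (fam true m).neighborSet (fw ((z'.1, !z'.2) : Fin m × Bool)) = {none, fw z'} := by
      rw [nb_w _ (hsp z' hz')]
      congr 1
      rw [show (((z'.1, !z'.2) : Fin m × Bool).1, !((z'.1, !z'.2) : Fin m × Bool).2) = z' by simp]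
    have hiso := MyAux.iso_of_pair (ℓ := ℓ) hN hN' (adj_u_w z) (adj_u_w z') h
    exact hirr _ _ (fun hc => hne (flip_inj (fw_inj hc))) hiso

-- ===== eta values =====

theorem eta_false (hm : 0 < m) : linkIrregularNumber (fam false m) = ((2 * m : ℕ) : ℕ∞) :=
  MyAux.linkIrregularNumber_eq _ _ (famLabel false m) (irr_false hm)
    (by rw [image_false hm, ncard_range_code]) (low_false hm)

theorem eta_true (hm : 2 ≤ m) : linkIrregularNumber (fam true m) = ((2 * m - 1 : ℕ) : ℕ∞) :=
  MyAux.linkIrregularNumber_eq _ _ (famLabel true m) (irr_true hm)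
    (by rw [image_true (by omega), ncard_image_code_true (by omega)]) (low_true hm)

end Fam

-- ===== the n = 1 graph =====

def G1 : SimpleGraph (Fin 6) := SimpleGraph.fromRel (fun a b =>
  (a,b) ∈ [((0:Fin 6),(1:Fin 6)),(0,3),(0,4),(0,5),(1,2),(1,3),(1,5),(2,3),(2,4)])

instance : DecidableRel G1.Adj :=
  fun a b => decidable_of_iff _ (SimpleGraph.fromRel_adj _ a b).symm

lemma G1_irr : IsLinkIrregular G1 (fun _ => 1) := by
  unfold IsLinkIrregular LabeledLinkIso
  decide

lemma G1_edge_nonempty : G1.edgeSet.Nonempty :=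
  ⟨s(0, 1), (SimpleGraph.mem_edgeSet _).2 (by decide)⟩

lemma G1_eta : linkIrregularNumber G1 = 1 := by
  have h := MyAux.linkIrregularNumber_eq G1 1 (fun _ => 1) G1_irr ?_ ?_
  · exact_mod_cast h
  · rw [Set.Nonempty.image_const G1_edge_nonempty]
    exact Set.ncard_singleton _
  · intro ℓ _
    have hfin : (ℓ '' G1.edgeSet).Finite := (Set.toFinite _).image ℓ
    have hpos := (Set.ncard_pos hfin).2 (G1_edge_nonempty.image ℓ)
    omega

/-- for every positive integer n there is a finite graph H with η(H) = n. -/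
theorem stmt_17 (n : ℕ) (hn : 0 < n) :
    ∃ (W : Type) (_ : Fintype W) (H : SimpleGraph W),
      linkIrregularNumber H = (n : ℕ∞) := by
  rcases eq_or_lt_of_le (show 1 ≤ n from hn) with h1 | h2
  · refine ⟨Fin 6, inferInstance, G1, ?_⟩
    rw [← h1]
    exact_mod_cast G1_eta
  · rcases Nat.even_or_odd n with ⟨k, hk⟩ | ⟨k, hk⟩
    · refine ⟨Fam.FV k, inferInstance, Fam.fam false k, ?_⟩
      rw [Fam.eta_false (m := k) (by omega)]
      have : 2 * k = n := by omega
      rw [this]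
    · refine ⟨Fam.FV (k + 1), inferInstance, Fam.fam true (k + 1), ?_⟩
      rw [Fam.eta_true (m := k + 1) (by omega)]
      have : 2 * (k + 1) - 1 = n := by omega
      rw [this]
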